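/- (Two-constant theorem) Let K and k be real constants with k < K, let Y ⊆ X, and let u ∈ SH(J) satisfy u ≤ K on X and u ≤ k on Y. Then for every z ∈ X, u(z) ≤ k·ω(z,Y,X) + K·(1 − ω(z,Y,X)). -/

import Mathlib

open MeasureTheory Topology Metric Set ENNReal

noncomputable instance (n : ℕ) : MeasurableSpace (EuclideanSpace ℂ (Fin n)) := borel _
instance (n : ℕ) : BorelSpace (EuclideanSpace ℂ (Fin n)) := ⟨rfl⟩

/-- The positive part of an extended real number, as an element of `ℝ≥0∞`. -/
noncomputable def EReal.toENNReal' (x : EReal) : ℝ≥0∞ :=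
  if x = ⊤ then ⊤ else ENNReal.ofReal x.toReal

/-- The integral of an `EReal`-valued function: the integral of its positive part minus the
integral of its negative part (computed in `EReal`). -/
noncomputable def eint {α : Type*} [MeasurableSpace α] (μ : Measure α) (u : α → EReal) : EReal :=
  ((∫⁻ x, (u x).toENNReal' ∂μ : ℝ≥0∞) : EReal) - ((∫⁻ x, (-u x).toENNReal' ∂μ : ℝ≥0∞) : EReal)

/-- The (closed) support of a measure: points all of whose open neighbourhoods have positive
measure. -/
def msupp {α : Type*} [TopologicalSpace α] [MeasurableSpace α] (μ : Measure α) : Set α :=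
  {x | ∀ U : Set α, IsOpen U → x ∈ U → 0 < μ U}

/-- The class `SH(J)`: upper semicontinuous functions with values in `[-∞, ∞)` satisfying the
sub-mean value inequality with respect to every measure in every `J z`. -/
def IsSH {α : Type*} [TopologicalSpace α] [MeasurableSpace α]
    (J : α → Set (Measure α)) (u : α → EReal) : Prop :=
  UpperSemicontinuous u ∧ (∀ z, u z ≠ ⊤) ∧ ∀ z, ∀ μ ∈ J z, u z ≤ eint μ u

/-- Continuous real-valued members of `SH(J)`. -/
def IsSHR {α : Type*} [TopologicalSpace α] [MeasurableSpace α]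
    (J : α → Set (Measure α)) (u : α → ℝ) : Prop :=
  Continuous u ∧ IsSH J (fun x => (u x : EReal))

/-- The Choquet boundary: points whose only Jensen measure is the Dirac measure. -/
def choquet {α : Type*} [TopologicalSpace α] [MeasurableSpace α]
    (J : α → Set (Measure α)) : Set α := {z | J z = {Measure.dirac z}}

/-- `z` is a peak point: there is `u ∈ SH(J)` with `u z = 0` and `u < 0` elsewhere. -/
def IsPeakPt {α : Type*} [TopologicalSpace α] [MeasurableSpace α]
    (J : α → Set (Measure α)) (z : α) : Prop :=
  ∃ u : α → EReal, IsSH J u ∧ u z = 0 ∧ ∀ w, w ≠ z → u w < 0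

/-- The harmonic measure `ω(z, E, X)`. -/
noncomputable def hm {α : Type*} [TopologicalSpace α] [MeasurableSpace α]
    (J : α → Set (Measure α)) (z : α) (E : Set α) : ℝ≥0∞ :=
  ⨅ (V : Set α) (_ : IsOpen V) (_ : E ⊆ V), ⨆ μ ∈ J z, μ V

lemma toENNReal'_mono {x y : EReal} (h : x ≤ y) : x.toENNReal' ≤ y.toENNReal' := by
  unfold EReal.toENNReal'
  rcases eq_or_ne y ⊤ with hy | hy
  · simp [hy]
  rcases eq_or_ne x ⊤ with hx | hx
  · exact absurd (top_le_iff.1 (hx ▸ h)) hy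
  rcases eq_or_ne x ⊥ with hb | hb
  · simp [hx, hy, hb]
  · simp only [hx, hy, if_neg]
    exact ENNReal.ofReal_le_ofReal (EReal.toReal_le_toReal h hb hy)

lemma toENNReal'_coe (x : ℝ) : (x : EReal).toENNReal' = ENNReal.ofReal x := by
  simp [EReal.toENNReal']

lemma eint_le_two_values {α : Type*} [MeasurableSpace α] (μ : Measure α)
    [IsProbabilityMeasure μ] (u : α → EReal) (V : Set α) (hV : MeasurableSet V) (a c : ℝ)
    (ha : ∀ x ∈ V, u x ≤ (a : EReal)) (hc : ∀ x ∉ V, u x ≤ (c : EReal)) :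
    eint μ u ≤ ((a * (μ V).toReal + c * (1 - (μ V).toReal) : ℝ) : EReal) := by
  classical
  set b : α → ℝ := fun x => if x ∈ V then a else c with hb
  have hub : ∀ x, u x ≤ ((b x : ℝ) : EReal) := by
    intro x; by_cases hx : x ∈ V
    · simpa [hb, hx] using ha x hx
    · simpa [hb, hx] using hc x hx
  -- integrals of positive/negative parts of b
  have hposf : (fun x => ((b x : ℝ) : EReal).toENNReal')
      = fun x => V.indicator (fun _ => ENNReal.ofReal a) x + Vᶜ.indicator (fun _ => ENNReal.ofReal c) x := by
    funext x; by_cases hx : x ∈ V <;> simp [toENNReal'_coe, hb, hx]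
  have hnegf : (fun x => (-((b x : ℝ) : EReal)).toENNReal')
      = fun x => V.indicator (fun _ => ENNReal.ofReal (-a)) x + Vᶜ.indicator (fun _ => ENNReal.ofReal (-c)) x := by
    funext x
    by_cases hx : x ∈ V <;> simp [hb, hx, ← EReal.coe_neg, toENNReal'_coe]
  have hintpos : ∫⁻ x, ((b x : ℝ) : EReal).toENNReal' ∂μ
      = ENNReal.ofReal a * μ V + ENNReal.ofReal c * μ Vᶜ := by
    rw [hposf, lintegral_add_left (measurable_const.indicator hV),
      lintegral_indicator hV, lintegral_indicator hV.compl,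
      setLIntegral_const, setLIntegral_const]
  have hintneg : ∫⁻ x, (-((b x : ℝ) : EReal)).toENNReal' ∂μ
      = ENNReal.ofReal (-a) * μ V + ENNReal.ofReal (-c) * μ Vᶜ := by
    rw [hnegf, lintegral_add_left (measurable_const.indicator hV),
      lintegral_indicator hV, lintegral_indicator hV.compl,
      setLIntegral_const, setLIntegral_const]
  have step1 : eint μ u ≤
      ((ENNReal.ofReal a * μ V + ENNReal.ofReal c * μ Vᶜ : ℝ≥0∞) : EReal)
        - ((ENNReal.ofReal (-a) * μ V + ENNReal.ofReal (-c) * μ Vᶜ : ℝ≥0∞) : EReal) := by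
    rw [← hintpos, ← hintneg]
    refine EReal.sub_le_sub ?_ ?_
    · exact_mod_cast lintegral_mono fun x => toENNReal'_mono (hub x)
    · exact_mod_cast lintegral_mono fun x => toENNReal'_mono (EReal.neg_le_neg_iff.2 (hub x))
  refine step1.trans ?_
  have hVfin : μ V ≠ ⊤ := (measure_lt_top μ V).ne
  have hVcfin : μ Vᶜ ≠ ⊤ := (measure_lt_top μ Vᶜ).ne
  have hA : (ENNReal.ofReal a * μ V + ENNReal.ofReal c * μ Vᶜ) ≠ ⊤ := by
    finiteness
  have hB : (ENNReal.ofReal (-a) * μ V + ENNReal.ofReal (-c) * μ Vᶜ) ≠ ⊤ := by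
    finiteness
  rw [← ENNReal.ofReal_toReal hA, ← ENNReal.ofReal_toReal hB]
  have hq : (μ Vᶜ).toReal = 1 - (μ V).toReal := by
    rw [measure_compl hV hVfin, measure_univ, ENNReal.toReal_sub_of_le (prob_le_one) (by simp)]
    simp
  have hq0 : 0 ≤ 1 - (μ V).toReal := by rw [← hq]; positivity
  have key : ∀ x y : ℝ, 0 ≤ x → 0 ≤ y →
      ((ENNReal.ofReal x : ℝ≥0∞) : EReal) - ((ENNReal.ofReal y : ℝ≥0∞) : EReal)
        = ((x - y : ℝ) : EReal) := by
    intro x y hx hy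
    rw [EReal.coe_ennreal_ofReal, EReal.coe_ennreal_ofReal, max_eq_left hx, max_eq_left hy,
      ← EReal.coe_sub]
  rw [ENNReal.toReal_add (by finiteness) (by finiteness),
    ENNReal.toReal_add (by finiteness) (by finiteness),
    ENNReal.toReal_mul, ENNReal.toReal_mul, ENNReal.toReal_mul, ENNReal.toReal_mul,
    ENNReal.toReal_ofReal', ENNReal.toReal_ofReal', ENNReal.toReal_ofReal',
    ENNReal.toReal_ofReal', hq]
  rw [key _ _ (by positivity) (by positivity)]
  apply EReal.coe_le_coe_iff.2
  have h1 : max a 0 - max (-a) 0 = a := by rcases le_total a 0 with h|h <;> simp [max_eq_left, max_eq_right, h] <;> ring_nf <;> simp [max_eq_left, max_eq_right, h, neg_nonneg]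
  have h2 : max c 0 - max (-c) 0 = c := by rcases le_total c 0 with h|h <;> simp [max_eq_left, max_eq_right, h] <;> ring_nf <;> simp [max_eq_left, max_eq_right, h, neg_nonneg]
  nlinarith [ENNReal.toReal_nonneg (a := μ V), hq0, le_max_right a 0, le_max_right c 0]

theorem two_constant_general {α : Type*} [TopologicalSpace α] [MeasurableSpace α]
    [OpensMeasurableSpace α]
    (J : α → Set (Measure α))
    (hprob : ∀ z : α, ∀ μ ∈ J z, IsProbabilityMeasure μ)
    (hdirac : ∀ z : α, Measure.dirac z ∈ J z)
    (u : α → EReal) (hu : IsSH J u) (K k : ℝ) (hkK : k < K) (Y : Set α)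
    (huK : ∀ w : α, u w ≤ (K : EReal)) (huk : ∀ w ∈ Y, u w ≤ (k : EReal)) (z : α) :
    u z ≤ ((k * (hm J z Y).toReal + K * (1 - (hm J z Y).toReal) : ℝ) : EReal) := by
  set ω : ℝ≥0∞ := hm J z Y with hωdef
  set r : ℝ := k * ω.toReal + K * (1 - ω.toReal) with hrdef
  have hω1 : ω ≤ 1 := by
    refine le_trans (iInf_le_of_le univ (iInf_le_of_le isOpen_univ
      (iInf_le_of_le (subset_univ _) le_rfl))) ?_
    refine iSup₂_le fun μ hμ => ?_
    haveI := hprob z μ hμ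
    simp
  have hωtop : ω ≠ ⊤ := fun h => by simp [h] at hω1
  have hω'0 : 0 ≤ ω.toReal := ENNReal.toReal_nonneg
  have hω'1 : ω.toReal ≤ 1 := by
    simpa using ENNReal.toReal_mono one_ne_top hω1
  have key : ∀ s : ℝ, r < s → u z ≤ (s : EReal) := by
    intro s hrs
    set D : ℝ := K - k with hD
    have hD0 : 0 < D := by simp [hD]; linarith
    set ε : ℝ := min ((s - r) / 2) (D / 2) with hε
    have hε0 : 0 < ε := by
      apply lt_min <;> linarith
    have hεD : ε < D := lt_of_le_of_lt (min_le_right _ _) (by linarith)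
    set a : ℝ := k + ε with ha
    have haK : a < K := by simp [ha, hD] at *; linarith
    set V : Set α := u ⁻¹' (Iio (a : EReal)) with hVdef
    have hVopen : IsOpen V := hu.1.isOpen_preimage a
    have hYV : Y ⊆ V := fun w hw => lt_of_le_of_lt (huk w hw)
      (by exact_mod_cast EReal.coe_lt_coe_iff.2 (by linarith : k < a))
    have hωle : ω ≤ ⨆ μ ∈ J z, μ V :=
      iInf_le_of_le V (iInf_le_of_le hVopen (iInf_le_of_le hYV le_rfl))
    set δ : ℝ := (s - r) / (2 * D) with hδ
    have hδ0 : 0 < δ := by apply div_pos <;> [linarith; positivity]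
    -- find μ ∈ J z with ω.toReal - δ < (μ V).toReal
    obtain ⟨μ, hμ, hμV⟩ : ∃ μ ∈ J z, ω.toReal - δ < (μ V).toReal := by
      by_cases hcase : ω.toReal - δ < 0
      · exact ⟨Measure.dirac z, hdirac z,
          lt_of_lt_of_le hcase ENNReal.toReal_nonneg⟩
      · push_neg at hcase
        have hωpos : 0 < ω.toReal := by linarith
        have h1 : ENNReal.ofReal (ω.toReal - δ) < ω := by
          have := (ENNReal.ofReal_lt_ofReal_iff hωpos).2 (by linarith : ω.toReal - δ < ω.toReal)
          rwa [ENNReal.ofReal_toReal hωtop] at this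
        have h2 : ENNReal.ofReal (ω.toReal - δ) < ⨆ μ ∈ J z, μ V := lt_of_lt_of_le h1 hωle
        rw [lt_iSup_iff] at h2
        obtain ⟨μ, h2⟩ := h2
        rw [lt_iSup_iff] at h2
        obtain ⟨hμ, h2⟩ := h2
        haveI := hprob z μ hμ
        exact ⟨μ, hμ, (ENNReal.ofReal_lt_iff_lt_toReal hcase (measure_lt_top μ V).ne).1 h2⟩
    haveI := hprob z μ hμ
    have hmeas : MeasurableSet V := hVopen.measurableSet
    have hbound : eint μ u ≤ ((a * (μ V).toReal + K * (1 - (μ V).toReal) : ℝ) : EReal) :=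
      eint_le_two_values μ u V hmeas a K (fun x hx => le_of_lt hx) (fun x _ => huK x)
    refine le_trans (hu.2.2 z μ hμ) (le_trans hbound ?_)
    apply EReal.coe_le_coe_iff.2
    have hp1 : (μ V).toReal ≤ 1 := by
      simpa using ENNReal.toReal_mono one_ne_top prob_le_one
    have hεhalf : ε ≤ (s - r) / 2 := min_le_left _ _
    have hDδ : D * δ = (s - r) / 2 := by
      field_simp [hδ]
      rw [hδ]
      field_simp [hD0.ne']
    nlinarith [ENNReal.toReal_nonneg (a := μ V), hμV, hω'1, hω'0]
  by_contra hlt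
  push_neg at hlt
  obtain ⟨s, hs1, hs2⟩ := EReal.exists_between_coe_real hlt
  exact absurd (key s (EReal.coe_lt_coe_iff.1 hs1)) (not_le.2 hs2)


theorem two_constant_theorem {n : ℕ} (X : Set (EuclideanSpace ℂ (Fin n)))
    (hXc : IsCompact X) (hXne : X.Nonempty)
    (J : ∀ _ : ↑X, Set (Measure ↑X))
    (hprob : ∀ z : ↑X, ∀ μ ∈ J z, IsProbabilityMeasure μ)
    (hdirac : ∀ z : ↑X, Measure.dirac z ∈ J z)
    (u : ↑X → EReal) (hu : IsSH J u) (K k : ℝ) (hkK : k < K) (Y : Set ↑X)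
    (huK : ∀ w : ↑X, u w ≤ (K : EReal)) (huk : ∀ w ∈ Y, u w ≤ (k : EReal)) (z : ↑X) :
    u z ≤ ((k * (hm J z Y).toReal + K * (1 - (hm J z Y).toReal) : ℝ) : EReal) := by
  exact two_constant_general J hprob hdirac u hu K k hkK Y huK huk z
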